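/- Let P_1 > 0, Q_1 > 0, P_a ≥ 0, Q > 0 be real numbers, set a = 1/(1+P_1Q_1) and P = P_a + P_1. Then the function κ ↦ a^κ·(1 − κ·a^κ·P_aQ/(1+(a^κ·P_a+P_1)Q)) has derivative at κ = 0 equal to −(ln(1+P_1Q_1) + P_aQ/(1+PQ)). -/

import Mathlib

/-- With `a = 1/(1+P_1*Q_1)` and `P = P_a + P_1`, the function
`κ ↦ a^κ(1 − κ·a^κ·P_a·Q/(1+(a^κ·P_a+P_1)·Q))` has derivative at `κ = 0` equal to
`−(ln(1+P_1*Q_1) + P_a·Q/(1+P·Q))`. -/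
theorem stmt_11 (Pa P1 Q1 Q : ℝ) (hP1 : 0 < P1) (hQ1 : 0 < Q1) (hPa : 0 ≤ Pa) (hQ : 0 < Q)
    (a P : ℝ) (ha : a = 1 / (1 + P1 * Q1)) (hP : P = Pa + P1) :
    HasDerivAt
      (fun κ : ℝ =>
        a ^ κ * (1 - κ * a ^ κ * Pa * Q / (1 + (a ^ κ * Pa + P1) * Q)))
      (-(Real.log (1 + P1 * Q1) + Pa * Q / (1 + P * Q))) 0 := by
  have hden : (0:ℝ) < 1 + P1 * Q1 := by positivity
  have ha0 : 0 < a := by rw [ha]; positivity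
  have hloga : Real.log a = -Real.log (1 + P1 * Q1) := by
    rw [ha, Real.log_div one_ne_zero (by positivity), Real.log_one]; ring
  have he : HasDerivAt (fun κ : ℝ => a ^ κ) (Real.log a) 0 := by
    simpa using (Real.hasStrictDerivAt_const_rpow ha0 0).hasDerivAt
  have hN : HasDerivAt (fun κ : ℝ => κ * a ^ κ * Pa * Q)
      ((1 * a ^ (0:ℝ) + 0 * Real.log a) * Pa * Q) 0 :=
    (((hasDerivAt_id 0).mul he).mul_const Pa).mul_const Q
  have hD : HasDerivAt (fun κ : ℝ => 1 + (a ^ κ * Pa + P1) * Q)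
      ((Real.log a * Pa) * Q) 0 :=
    (((he.mul_const Pa).add_const P1).mul_const Q).const_add 1
  have hd0 : (1 + ((a:ℝ) ^ (0:ℝ) * Pa + P1) * Q) ≠ 0 := by
    have : (0:ℝ) < 1 + (a ^ (0:ℝ) * Pa + P1) * Q := by
      rw [Real.rpow_zero]; positivity
    exact ne_of_gt this
  have hg := hN.div hD hd0
  have hmain := he.mul (hg.const_sub 1)
  convert hmain using 1
  · rfl
  · rfl
  · rfl
  simp only [Real.rpow_zero, hloga, hP, Pi.div_apply, zero_mul, zero_div]
  have h1 : (0:ℝ) < 1 + (Pa + P1) * Q := by positivity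
  field_simp
  ring
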